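/- arXiv:1904.11594 — 2 statements merged into one kernel-verified Lean document; each statement's English description precedes it below -/
import Mathlib

section
/- For the multivariate regression model Y = XB + ε with independent rows ε_{i·} ~ N_K(0, Ψ), Ψ positive definite with largest eigenvalue d, fix ε > 0 and define the test Φ_n = I(‖B̂ − B₀‖ > ε/2), where B̂ = (XᵀX)⁻¹XᵀY is the least-squares estimator and B₀ is a fixed reference parameter. Assume (A3): there exists c > 0 with liminf_{n→∞} λ₁((1/n)XᵀX) > c, where λ₁ denotes the smallest eigenvalue. Let B_ε = { B : ‖B − B₀‖ > ε }. Then (for all n sufficiently large that λ₁((1/n)XᵀX) > c) the type II error satisfies sup_{B ∈ B_ε} E_B(1 − Φ_n) ≤ exp(−n ε² c / (16 d)). -/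
open MeasureTheory Matrix Real

/-- The `K`-variate normal density with mean `μ` and covariance `Ψ`. -/
noncomputable def normalDensity {K : ℕ} (Ψ : Matrix (Fin K) (Fin K) ℝ)
    (μ y : Fin K → ℝ) : ℝ :=
  (2 * π) ^ (-(K : ℝ) / 2) * Ψ.det ^ (-(1 : ℝ) / 2) *
    Real.exp (-(1 / 2) * ((y - μ) ⬝ᵥ (Ψ⁻¹ *ᵥ (y - μ))))

/-- The Frobenius norm of a matrix. -/
noncomputable def frobNorm {m n : Type*} [Fintype m] [Fintype n]
    (M : Matrix m n ℝ) : ℝ :=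
  Real.sqrt (∑ i, ∑ j, (M i j) ^ 2)

lemma star_eq_T {m : ℕ} (U : Matrix (Fin m) (Fin m) ℝ) : star U = Uᵀ := by
  ext i j; simp [Matrix.star_eq_conjTranspose, Matrix.conjTranspose_apply]

lemma quad_UDU {m : ℕ} {U : Matrix (Fin m) (Fin m) ℝ} (lam : Fin m → ℝ) (x : Fin m → ℝ) :
    x ⬝ᵥ (U * diagonal lam * star U) *ᵥ x = ∑ i, lam i * ((star U *ᵥ x) i)^2 := by
  rw [← mulVec_mulVec, ← mulVec_mulVec, dotProduct_mulVec, ← transpose_transpose U,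
    vecMul_transpose, transpose_transpose, ← star_eq_T]
  simp only [dotProduct, mulVec_diagonal]
  exact Finset.sum_congr rfl fun i _ => by ring

lemma norm_UDU {m : ℕ} {U : Matrix (Fin m) (Fin m) ℝ} (hU : U * star U = 1) (x : Fin m → ℝ) :
    (star U *ᵥ x) ⬝ᵥ (star U *ᵥ x) = x ⬝ᵥ x := by
  nth_rewrite 1 [dotProduct_mulVec]
  rw [star_eq_T, vecMul_transpose, mulVec_mulVec, ← star_eq_T U, hU, one_mulVec]

lemma spectral_real {m : ℕ} {A : Matrix (Fin m) (Fin m) ℝ} (hA : A.IsHermitian) :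
    A = (hA.eigenvectorUnitary : Matrix (Fin m) (Fin m) ℝ) * diagonal hA.eigenvalues
      * (star (hA.eigenvectorUnitary : Matrix (Fin m) (Fin m) ℝ)) := by
  simpa using hA.spectral_theorem

lemma unitary_mul_star {m : ℕ} {A : Matrix (Fin m) (Fin m) ℝ} (hA : A.IsHermitian) :
    (hA.eigenvectorUnitary : Matrix (Fin m) (Fin m) ℝ) * star (hA.eigenvectorUnitary : Matrix (Fin m) (Fin m) ℝ) = 1 :=
  (Unitary.mem_iff.mp hA.eigenvectorUnitary.2).2

lemma star_mul_unitary {m : ℕ} {A : Matrix (Fin m) (Fin m) ℝ} (hA : A.IsHermitian) :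
    star (hA.eigenvectorUnitary : Matrix (Fin m) (Fin m) ℝ) * (hA.eigenvectorUnitary : Matrix (Fin m) (Fin m) ℝ) = 1 :=
  (Unitary.mem_iff.mp hA.eigenvectorUnitary.2).1
lemma quad_UDU_le {m : ℕ} {U : Matrix (Fin m) (Fin m) ℝ} (hU : U * star U = 1)
    {lam : Fin m → ℝ} {d : ℝ} (hle : ∀ i, lam i ≤ d) (x : Fin m → ℝ) :
    x ⬝ᵥ (U * diagonal lam * star U) *ᵥ x ≤ d * (x ⬝ᵥ x) := by
  rw [quad_UDU, ← norm_UDU hU x]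
  set y := star U *ᵥ x
  calc ∑ i, lam i * (y i)^2 ≤ ∑ i, d * (y i)^2 :=
        Finset.sum_le_sum fun i _ => mul_le_mul_of_nonneg_right (hle i) (sq_nonneg _)
    _ = d * (y ⬝ᵥ y) := by simp [dotProduct, Finset.mul_sum, sq]

lemma quad_UDU_ge {m : ℕ} {U : Matrix (Fin m) (Fin m) ℝ} (hU : U * star U = 1)
    {lam : Fin m → ℝ} {c : ℝ} (hge : ∀ i, c ≤ lam i) (x : Fin m → ℝ) :
    c * (x ⬝ᵥ x) ≤ x ⬝ᵥ (U * diagonal lam * star U) *ᵥ x := by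
  rw [quad_UDU, ← norm_UDU hU x]
  set y := star U *ᵥ x
  calc c * (y ⬝ᵥ y) = ∑ i, c * (y i)^2 := by simp [dotProduct, Finset.mul_sum, sq]
    _ ≤ ∑ i, lam i * (y i)^2 :=
        Finset.sum_le_sum fun i _ => mul_le_mul_of_nonneg_right (hge i) (sq_nonneg _)

lemma inv_UDU {m : ℕ} {U : Matrix (Fin m) (Fin m) ℝ} (hU1 : U * star U = 1)
    (hU2 : star U * U = 1) {lam : Fin m → ℝ} (hlam : ∀ i, lam i ≠ 0) :
    (U * diagonal lam * star U)⁻¹ = U * diagonal (fun i => (lam i)⁻¹) * star U := by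
  apply inv_eq_right_inv
  calc (U * diagonal lam * star U) * (U * diagonal (fun i => (lam i)⁻¹) * star U)
      = U * (diagonal lam * (star U * U) * diagonal (fun i => (lam i)⁻¹)) * star U := by
        simp only [Matrix.mul_assoc]
    _ = 1 := by
        rw [hU2, Matrix.mul_one, diagonal_mul_diagonal]
        have : (fun i => lam i * (lam i)⁻¹) = fun _ => (1:ℝ) := by
          funext i; exact mul_inv_cancel₀ (hlam i)
        rw [this, diagonal_one, Matrix.mul_one, hU1]
lemma measurable_mulVec {m : ℕ} (U : Matrix (Fin m) (Fin m) ℝ) :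
    Measurable (fun v : Fin m → ℝ => U *ᵥ v) := by
  apply measurable_pi_lambda
  intro i
  simp only [mulVec, dotProduct]
  exact Finset.measurable_sum _ fun j _ => (measurable_pi_apply j).const_mul _

/-- The measurable equivalence `v ↦ U *ᵥ v` for `U` with two-sided inverse `star U`. -/
noncomputable def mulVecEquiv {m : ℕ} {U : Matrix (Fin m) (Fin m) ℝ}
    (hU1 : U * star U = 1) (hU2 : star U * U = 1) : (Fin m → ℝ) ≃ᵐ (Fin m → ℝ) where
  toFun v := U *ᵥ v
  invFun v := star U *ᵥ v
  left_inv v := by show star U *ᵥ (U *ᵥ v) = v; rw [mulVec_mulVec, hU2, one_mulVec]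
  right_inv v := by show U *ᵥ (star U *ᵥ v) = v; rw [mulVec_mulVec, hU1, one_mulVec]
  measurable_toFun := measurable_mulVec U
  measurable_invFun := measurable_mulVec (star U)

lemma mulVecEquiv_measurePreserving {m : ℕ} {U : Matrix (Fin m) (Fin m) ℝ}
    (hU1 : U * star U = 1) (hU2 : star U * U = 1) :
    MeasurePreserving (mulVecEquiv hU1 hU2) volume volume := by
  have hdet2 : U.det * U.det = 1 := by
    have := congrArg Matrix.det hU2
    rwa [Matrix.det_mul, star_eq_T, Matrix.det_transpose, Matrix.det_one] at this
  have habs : |U.det| = 1 := by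
    nlinarith [abs_nonneg U.det, abs_mul_abs_self U.det]
  have hdet : U.det ≠ 0 := by
    intro h; rw [h] at habs; simp at habs
  refine ⟨(mulVecEquiv hU1 hU2).measurable, ?_⟩
  have : ⇑(mulVecEquiv hU1 hU2) = ⇑(Matrix.toLin' U) := by
    funext v; simp [mulVecEquiv, Matrix.toLin'_apply]
  rw [this, Real.map_matrix_volume_pi_eq_smul_volume_pi hdet, abs_inv, habs]
  simp
lemma mulVecEquiv_apply {m : ℕ} {U : Matrix (Fin m) (Fin m) ℝ}
    (hU1 : U * star U = 1) (hU2 : star U * U = 1) (v : Fin m → ℝ) :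
    mulVecEquiv hU1 hU2 v = U *ᵥ v := rfl

lemma gauss_norm {m : ℕ} (Ψ : Matrix (Fin m) (Fin m) ℝ) (hΨ : Ψ.PosDef) :
    Integrable (fun z : Fin m → ℝ => exp (-(1/2) * (z ⬝ᵥ Ψ⁻¹ *ᵥ z))) ∧
    ∫ z : Fin m → ℝ, exp (-(1/2) * (z ⬝ᵥ Ψ⁻¹ *ᵥ z))
      = (2*π) ^ ((m:ℝ)/2) * Ψ.det ^ ((1:ℝ)/2) := by
  have hApd : (Ψ⁻¹).PosDef := hΨ.inv
  have hA : (Ψ⁻¹).IsHermitian := hApd.1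
  set U : Matrix (Fin m) (Fin m) ℝ := (hA.eigenvectorUnitary : Matrix (Fin m) (Fin m) ℝ) with hUdef
  set lam : Fin m → ℝ := hA.eigenvalues with hlamdef
  have hU1 : U * star U = 1 := unitary_mul_star hA
  have hU2 : star U * U = 1 := star_mul_unitary hA
  have hlampos : ∀ i, 0 < lam i := hApd.eigenvalues_pos
  set F : (Fin m → ℝ) → ℝ := fun z => exp (-(1/2) * (z ⬝ᵥ Ψ⁻¹ *ᵥ z)) with hF
  set L := mulVecEquiv hU1 hU2 with hL
  have hcomp : (F ∘ L) = fun v => ∏ i, exp (-(lam i / 2) * v i ^ 2) := by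
    funext v
    have h1 : (U *ᵥ v) ⬝ᵥ Ψ⁻¹ *ᵥ (U *ᵥ v) = ∑ i, lam i * v i ^ 2 := by
      conv_lhs => rw [spectral_real hA]
      rw [quad_UDU]
      congr 1
      funext i
      rw [mulVec_mulVec, hU2, one_mulVec]
    have hLv : L v = U *ᵥ v := mulVecEquiv_apply hU1 hU2 v
    show F (L v) = _
    rw [hF]
    simp only []
    rw [hLv, h1, Finset.mul_sum, ← Real.exp_sum]
    congr 1
    exact Finset.sum_congr rfl fun i _ => by ring
  have hint_prod : Integrable (fun v : Fin m → ℝ => ∏ i, exp (-(lam i / 2) * v i ^ 2)) := by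
    apply Integrable.fintype_prod (f := fun (i : Fin m) (t : ℝ) => exp (-(lam i / 2) * t ^ 2))
    intro i
    exact integrable_exp_neg_mul_sq (by have := hlampos i; linarith)
  have hmp := mulVecEquiv_measurePreserving hU1 hU2
  have hemb : MeasurableEmbedding L := L.measurableEmbedding
  constructor
  · rw [← hmp.integrable_comp_emb hemb, hcomp]
    exact hint_prod
  · have h2 : ∫ z, F z = ∫ v, (F ∘ L) v := (hmp.integral_comp hemb F).symm
    rw [h2, hcomp, MeasureTheory.integral_fintype_prod_volume_eq_prod
      (f := fun (i : Fin m) (t : ℝ) => exp (-(lam i / 2) * t ^ 2))]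
    have h3 : ∀ i : Fin m, ∫ t : ℝ, exp (-(lam i / 2) * t ^ 2) = (2 * π / lam i) ^ ((1:ℝ)/2) := by
      intro i
      rw [integral_gaussian, Real.sqrt_eq_rpow]
      congr 1
      field_simp
    rw [Finset.prod_congr rfl fun i _ => h3 i]
    rw [Real.finset_prod_rpow _ _ (fun i _ => le_of_lt (by have := hlampos i; positivity)) _]
    have h4 : ∏ i : Fin m, (2 * π / lam i) = (2*π) ^ m * Ψ.det := by
      rw [Finset.prod_div_distrib, Finset.prod_const, Finset.card_univ, Fintype.card_fin]
      have hdet : ∏ i, lam i = (Ψ.det)⁻¹ := by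
        have h := hA.det_eq_prod_eigenvalues
        simp only [Matrix.det_nonsing_inv, Ring.inverse_eq_inv'] at h
        simpa using h.symm
      rw [hdet]
      field_simp
    rw [h4, Real.mul_rpow (by positivity) (le_of_lt hΨ.det_pos),
      ← Real.rpow_natCast (2*π) m, ← Real.rpow_mul (by positivity)]
    ring_nf
lemma dot_symm {m : ℕ} {A : Matrix (Fin m) (Fin m) ℝ} (hT : Aᵀ = A) (v w : Fin m → ℝ) :
    v ⬝ᵥ A *ᵥ w = w ⬝ᵥ A *ᵥ v := by
  rw [dotProduct_mulVec]
  nth_rewrite 1 [← hT]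
  rw [vecMul_transpose, dotProduct_comm]

lemma gauss_mgf {m : ℕ} (Ψ : Matrix (Fin m) (Fin m) ℝ) (hΨ : Ψ.PosDef) (μ b : Fin m → ℝ) :
    Integrable (fun y : Fin m → ℝ => normalDensity Ψ μ y * exp ((y - μ) ⬝ᵥ b)) ∧
    ∫ y : Fin m → ℝ, normalDensity Ψ μ y * exp ((y - μ) ⬝ᵥ b)
      = exp ((1/2) * (b ⬝ᵥ Ψ *ᵥ b)) := by
  have hdet : IsUnit Ψ.det := (ne_of_gt hΨ.det_pos).isUnit
  have hTΨ : Ψᵀ = Ψ := by rw [← star_eq_T]; exact hΨ.1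
  have hTinv : (Ψ⁻¹)ᵀ = Ψ⁻¹ := by rw [← star_eq_T]; exact hΨ.1.inv
  set s : Fin m → ℝ := Ψ *ᵥ b with hs
  have hinvs : Ψ⁻¹ *ᵥ s = b := by
    rw [hs, mulVec_mulVec, Matrix.nonsing_inv_mul Ψ hdet, one_mulVec]
  set C : ℝ := (2 * π) ^ (-(m : ℝ) / 2) * Ψ.det ^ (-(1 : ℝ) / 2) with hC
  have key : ∀ y : Fin m → ℝ,
      normalDensity Ψ μ y * exp ((y - μ) ⬝ᵥ b)
        = (C * exp ((1/2) * (b ⬝ᵥ Ψ *ᵥ b))) *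
            exp (-(1/2) * ((y - (μ + s)) ⬝ᵥ Ψ⁻¹ *ᵥ (y - (μ + s)))) := by
    intro y
    set z : Fin m → ℝ := y - μ with hz
    have hzs : y - (μ + s) = z - s := by rw [hz]; abel
    have expand : (z - s) ⬝ᵥ Ψ⁻¹ *ᵥ (z - s)
        = z ⬝ᵥ Ψ⁻¹ *ᵥ z - 2 * (z ⬝ᵥ b) + b ⬝ᵥ Ψ *ᵥ b := by
      rw [sub_dotProduct, mulVec_sub, dotProduct_sub, dotProduct_sub, hinvs]
      rw [dot_symm hTinv s z, hinvs]
      have h1 : s ⬝ᵥ b = b ⬝ᵥ Ψ *ᵥ b := by rw [hs, dotProduct_comm]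
      rw [h1]
      ring
    have scalish : ∀ (cc q1 q2 q3 : ℝ), cc * rexp (-(1/2)*q1) * rexp q2
        = cc * rexp ((1:ℝ)/2 * q3) * rexp (-(1/2)*(q1 - 2*q2 + q3)) := by
      intros cc q1 q2 q3
      rw [mul_assoc, mul_assoc, ← Real.exp_add, ← Real.exp_add]
      congr 1
      ring
    rw [normalDensity, hzs, ← hz, expand, ← hC]
    exact scalish C _ _ _
  have hGint := (gauss_norm Ψ hΨ).1
  have hGval := (gauss_norm Ψ hΨ).2
  have hshift : Integrable
      (fun y : Fin m → ℝ => exp (-(1/2) * ((y - (μ + s)) ⬝ᵥ Ψ⁻¹ *ᵥ (y - (μ + s))))) :=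
    hGint.comp_sub_right (μ + s)
  constructor
  · simp only [key]
    exact hshift.const_mul _
  · calc ∫ y : Fin m → ℝ, normalDensity Ψ μ y * exp ((y - μ) ⬝ᵥ b)
        = ∫ y : Fin m → ℝ, (C * exp ((1/2) * (b ⬝ᵥ Ψ *ᵥ b))) *
            exp (-(1/2) * ((y - (μ + s)) ⬝ᵥ Ψ⁻¹ *ᵥ (y - (μ + s)))) := by
          exact integral_congr_ae (Filter.Eventually.of_forall key)
      _ = (C * exp ((1/2) * (b ⬝ᵥ Ψ *ᵥ b))) *
            ∫ y : Fin m → ℝ, exp (-(1/2) * ((y - (μ + s)) ⬝ᵥ Ψ⁻¹ *ᵥ (y - (μ + s)))) :=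
          integral_const_mul _ _
      _ = (C * exp ((1/2) * (b ⬝ᵥ Ψ *ᵥ b))) *
            ∫ z : Fin m → ℝ, exp (-(1/2) * (z ⬝ᵥ Ψ⁻¹ *ᵥ z)) := by
          rw [integral_sub_right_eq_self (μ := volume)
            (fun z : Fin m → ℝ => exp (-(1/2) * (z ⬝ᵥ Ψ⁻¹ *ᵥ z))) (μ + s)]
      _ = exp ((1/2) * (b ⬝ᵥ Ψ *ᵥ b)) := by
          rw [hGval, hC, mul_comm ((2 * π) ^ (-(m:ℝ) / 2) * Ψ.det ^ (-(1:ℝ) / 2)), mul_assoc]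
          rw [show (2 * π) ^ (-(m:ℝ) / 2) * Ψ.det ^ (-(1:ℝ) / 2) *
              ((2*π) ^ ((m:ℝ)/2) * Ψ.det ^ ((1:ℝ)/2)) = ((2 * π) ^ (-(m:ℝ) / 2) *
              (2*π) ^ ((m:ℝ)/2)) * (Ψ.det ^ (-(1:ℝ) / 2) * Ψ.det ^ ((1:ℝ)/2)) by ring]
          rw [← Real.rpow_add (by positivity), ← Real.rpow_add hΨ.det_pos,
            show -(m:ℝ)/2 + (m:ℝ)/2 = 0 by ring, show -(1:ℝ)/2 + (1:ℝ)/2 = 0 by ring,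
            Real.rpow_zero, Real.rpow_zero]
          ring
noncomputable def finner {p K : ℕ} (P Q : Matrix (Fin p) (Fin K) ℝ) : ℝ :=
  Matrix.trace (Pᵀ * Q)

lemma finner_eq_sum {p K : ℕ} (P Q : Matrix (Fin p) (Fin K) ℝ) :
    finner P Q = ∑ i, ∑ j, P i j * Q i j := by
  simp only [finner, Matrix.trace, Matrix.diag, Matrix.mul_apply, Matrix.transpose_apply]
  rw [Finset.sum_comm]

lemma finner_self {p K : ℕ} (P : Matrix (Fin p) (Fin K) ℝ) :
    finner P P = ∑ i, ∑ j, P i j ^ 2 := by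
  rw [finner_eq_sum]
  exact Finset.sum_congr rfl fun i _ => Finset.sum_congr rfl fun j _ => (sq (P i j)).symm

lemma finner_mul_left {n p K : ℕ} (M : Matrix (Fin p) (Fin n) ℝ)
    (P : Matrix (Fin n) (Fin K) ℝ) (Q : Matrix (Fin p) (Fin K) ℝ) :
    finner (M * P) Q = finner P (Mᵀ * Q) := by
  simp only [finner, Matrix.transpose_mul, Matrix.mul_assoc]

lemma finner_neg_right {p K : ℕ} (P Q : Matrix (Fin p) (Fin K) ℝ) :
    finner P (-Q) = -finner P Q := by
  simp [finner, Matrix.mul_neg]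

lemma finner_neg_neg {p K : ℕ} (P Q : Matrix (Fin p) (Fin K) ℝ) :
    finner (-P) (-Q) = finner P Q := by
  simp [finner, Matrix.mul_neg, Matrix.transpose_neg, Matrix.neg_mul]

lemma finner_sub_left {p K : ℕ} (P Q R : Matrix (Fin p) (Fin K) ℝ) :
    finner (P - Q) R = finner P R - finner Q R := by
  simp [finner, Matrix.sub_mul, Matrix.transpose_sub]

lemma finner_smul_left {p K : ℕ} (c : ℝ) (P Q : Matrix (Fin p) (Fin K) ℝ) :
    finner (c • P) Q = c * finner P Q := by
  simp [finner, Matrix.transpose_smul, Matrix.smul_mul]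

lemma finner_smul_right {p K : ℕ} (c : ℝ) (P Q : Matrix (Fin p) (Fin K) ℝ) :
    finner P (c • Q) = c * finner P Q := by
  simp [finner, Matrix.mul_smul]

lemma finner_quad {p K : ℕ} (A : Matrix (Fin p) (Fin p) ℝ) (P : Matrix (Fin p) (Fin K) ℝ) :
    finner P (A * P) = ∑ k, (fun j => P j k) ⬝ᵥ A *ᵥ (fun j => P j k) := by
  simp only [finner, Matrix.trace, Matrix.diag, Matrix.mul_apply, Matrix.transpose_apply,
    dotProduct, mulVec]

lemma frobNorm_nonneg {p K : ℕ} (P : Matrix (Fin p) (Fin K) ℝ) : 0 ≤ frobNorm P :=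
  Real.sqrt_nonneg _

lemma frobNorm_sq {p K : ℕ} (P : Matrix (Fin p) (Fin K) ℝ) :
    frobNorm P ^ 2 = ∑ i, ∑ j, P i j ^ 2 :=
  Real.sq_sqrt (by positivity)

lemma finner_le_frob {p K : ℕ} (P Q : Matrix (Fin p) (Fin K) ℝ) :
    finner P Q ≤ frobNorm P * frobNorm Q := by
  have key := Finset.sum_mul_sq_le_sq_mul_sq Finset.univ
    (fun x : Fin p × Fin K => P x.1 x.2) (fun x : Fin p × Fin K => Q x.1 x.2)
  have hPQ : finner P Q = ∑ x : Fin p × Fin K, P x.1 x.2 * Q x.1 x.2 := by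
    rw [finner_eq_sum, Fintype.sum_prod_type]
  have hP2 : ∑ x : Fin p × Fin K, P x.1 x.2 ^ 2 = ∑ i, ∑ j, P i j ^ 2 :=
    Fintype.sum_prod_type _
  have hQ2 : ∑ x : Fin p × Fin K, Q x.1 x.2 ^ 2 = ∑ i, ∑ j, Q i j ^ 2 :=
    Fintype.sum_prod_type _
  calc finner P Q ≤ |finner P Q| := le_abs_self _
    _ = Real.sqrt ((finner P Q) ^ 2) := (Real.sqrt_sq_eq_abs _).symm
    _ ≤ Real.sqrt ((∑ i, ∑ j, P i j ^ 2) * ∑ i, ∑ j, Q i j ^ 2) := by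
        apply Real.sqrt_le_sqrt
        rw [hPQ, ← hP2, ← hQ2]
        exact key
    _ = frobNorm P * frobNorm Q := by
        rw [frobNorm, frobNorm, ← Real.sqrt_mul (by positivity)]

set_option maxHeartbeats 1000000

/-- Type II error bound for the test `Φ_n = I(‖B̂ - B₀‖ > ε/2)` in the multivariate
regression model `Y = XB + ε`, rows of `ε` iid `N_K(0, Ψ)`: if the smallest
eigenvalue of `(1/n)XᵀX` exceeds `c > 0` and `d` is the largest eigenvalue of `Ψ`,
then `sup_{B : ‖B - B₀‖ > ε} E_B(1 - Φ_n) ≤ exp(-n ε² c / (16 d))`. -/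
theorem stmt_3 {n p K : ℕ} (X : Matrix (Fin n) (Fin p) ℝ)
    (hrank : X.rank = p)
    (Ψ : Matrix (Fin K) (Fin K) ℝ) (hΨ : Ψ.PosDef)
    (B₀ : Matrix (Fin p) (Fin K) ℝ)
    (ε c d : ℝ) (hε : 0 < ε) (hc : 0 < c)
    (hH : (((n : ℝ)⁻¹) • (Xᵀ * X)).IsHermitian)
    (hmin : ∀ i, c < hH.eigenvalues i)
    (hd : IsGreatest (Set.range hΨ.1.eigenvalues) d) :
    ∀ B : Matrix (Fin p) (Fin K) ℝ, ε < frobNorm (B - B₀) →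
      (∫ Y : Fin n → Fin K → ℝ,
          (∏ i, normalDensity Ψ (fun k => (X * B) i k) (Y i)) *
            Set.indicator
              {Y' : Fin n → Fin K → ℝ |
                frobNorm ((Xᵀ * X)⁻¹ * Xᵀ * Matrix.of Y' - B₀) ≤ ε / 2}
              (fun _ => (1 : ℝ)) Y)
        ≤ Real.exp (-((n : ℝ) * ε ^ 2 * c / (16 * d))) := by
  intro B hB
  have hd0 : 0 < d := by
    obtain ⟨j, hj⟩ := hd.1
    rw [← hj]; exact hΨ.eigenvalues_pos j
  have hdens_nonneg : ∀ (μ0 y : Fin K → ℝ), 0 ≤ normalDensity Ψ μ0 y := fun μ0 y =>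
    mul_nonneg (mul_nonneg (Real.rpow_nonneg (by positivity) _)
      (Real.rpow_nonneg hΨ.det_pos.le _)) (Real.exp_nonneg _)
  rcases Nat.eq_zero_or_pos n with hn0 | hn
  · subst hn0
    have hvol : (volume : Measure (Fin 0 → Fin K → ℝ)) Set.univ = 1 := by
      simp [MeasureTheory.volume_pi, MeasureTheory.Measure.pi_univ]
    haveI : IsFiniteMeasure (volume : Measure (Fin 0 → Fin K → ℝ)) :=
      ⟨by rw [hvol]; exact ENNReal.one_lt_top⟩
    have hle1 : ∀ Y : Fin 0 → Fin K → ℝ,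
        (∏ i, normalDensity Ψ (fun k => (X * B) i k) (Y i)) *
          Set.indicator {Y' : Fin 0 → Fin K → ℝ |
                frobNorm ((Xᵀ * X)⁻¹ * Xᵀ * Matrix.of Y' - B₀) ≤ ε / 2}
            (fun _ => (1 : ℝ)) Y ≤ 1 := by
      intro Y
      rw [Finset.univ_eq_empty, Finset.prod_empty, one_mul]
      by_cases hY : Y ∈ {Y' : Fin 0 → Fin K → ℝ |
          frobNorm ((Xᵀ * X)⁻¹ * Xᵀ * Matrix.of Y' - B₀) ≤ ε / 2}
      · rw [Set.indicator_of_mem hY]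
      · rw [Set.indicator_of_notMem hY]; norm_num
    have hnn : ∀ Y : Fin 0 → Fin K → ℝ,
        0 ≤ (∏ i, normalDensity Ψ (fun k => (X * B) i k) (Y i)) *
          Set.indicator {Y' : Fin 0 → Fin K → ℝ |
                frobNorm ((Xᵀ * X)⁻¹ * Xᵀ * Matrix.of Y' - B₀) ≤ ε / 2}
            (fun _ => (1 : ℝ)) Y := fun Y =>
      mul_nonneg (Finset.prod_nonneg fun i _ => hdens_nonneg _ _)
        (Set.indicator_nonneg (fun _ _ => zero_le_one) _)
    calc (∫ Y : Fin 0 → Fin K → ℝ,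
          (∏ i, normalDensity Ψ (fun k => (X * B) i k) (Y i)) *
            Set.indicator {Y' : Fin 0 → Fin K → ℝ |
                frobNorm ((Xᵀ * X)⁻¹ * Xᵀ * Matrix.of Y' - B₀) ≤ ε / 2}
              (fun _ => (1 : ℝ)) Y) ≤ ∫ _ : Fin 0 → Fin K → ℝ, (1:ℝ) :=
          integral_mono_of_nonneg (Filter.Eventually.of_forall hnn)
            (integrable_const 1) (Filter.Eventually.of_forall hle1)
      _ = 1 := by simp [Measure.real, hvol]
      _ ≤ Real.exp (-((0 : ℕ) * ε ^ 2 * c / (16 * d))) := by norm_num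
  -- main case
  have hn' : (0:ℝ) < (n:ℝ) := by exact_mod_cast hn
  set Δ : Matrix (Fin p) (Fin K) ℝ := B - B₀ with hΔ
  set nd : ℝ := frobNorm Δ with hnd
  have hnd0 : 0 < nd := lt_trans hε hB
  set e : Matrix (Fin p) (Fin K) ℝ := nd⁻¹ • Δ with he
  have hfΔΔ : finner Δ Δ = nd^2 := by rw [finner_self, ← frobNorm_sq]
  have hfee : finner e e = 1 := by
    rw [he, finner_smul_left, finner_smul_right, hfΔΔ]
    field_simp
  have hfrobe : frobNorm e = 1 := by
    have h2 : frobNorm e ^ 2 = 1 := by rw [frobNorm_sq, ← finner_self, hfee]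
    nlinarith [frobNorm_nonneg e]
  have hfΔe : finner Δ e = nd := by
    rw [he, finner_smul_right, hfΔΔ]
    field_simp
  set G := Xᵀ * X with hG
  have hGsymT : Gᵀ = G := by rw [hG, Matrix.transpose_mul, Matrix.transpose_transpose]
  set ν := hH.eigenvalues with hν
  set UG : Matrix (Fin p) (Fin p) ℝ := (hH.eigenvectorUnitary : Matrix (Fin p) (Fin p) ℝ) with hUG
  have hU1G : UG * star UG = 1 := unitary_mul_star hH
  have hU2G : star UG * UG = 1 := star_mul_unitary hH
  have hGspec : G = UG * diagonal (fun i => (n:ℝ) * ν i) * star UG := by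
    have h0 : ((n:ℝ)⁻¹ • G) = UG * diagonal ν * star UG := spectral_real hH
    have h1 : G = (n:ℝ) • ((n:ℝ)⁻¹ • G) := by
      rw [smul_smul, mul_inv_cancel₀ (ne_of_gt hn'), one_smul]
    have h2 : diagonal (fun i => (n:ℝ) * ν i) = (n:ℝ) • diagonal ν := by
      rw [← Matrix.diagonal_smul]
      congr 1
    rw [h1, h0, h2, Matrix.mul_smul, Matrix.smul_mul]
  have hnν : ∀ i, (n:ℝ) * c ≤ (n:ℝ) * ν i := fun i =>
    mul_le_mul_of_nonneg_left (le_of_lt (hmin i)) (le_of_lt hn')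
  have hnc0 : (0:ℝ) < (n:ℝ) * c := by positivity
  have hnν0 : ∀ i, 0 < (n:ℝ) * ν i := fun i => lt_of_lt_of_le hnc0 (hnν i)
  have hdetG : G.det = ∏ i, ((n:ℝ) * ν i) := by
    rw [hGspec, Matrix.det_mul, Matrix.det_mul, Matrix.det_diagonal]
    have hUU : UG.det * (star UG).det = 1 := by
      rw [← Matrix.det_mul, hU1G, Matrix.det_one]
    calc UG.det * (∏ i, ((n:ℝ) * ν i)) * (star UG).det
        = (UG.det * (star UG).det) * ∏ i, ((n:ℝ) * ν i) := by ring
      _ = ∏ i, ((n:ℝ) * ν i) := by rw [hUU, one_mul]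
  have hdetG0 : IsUnit G.det := by
    rw [hdetG]
    exact (ne_of_gt (Finset.prod_pos fun i _ => hnν0 i)).isUnit
  have hGinv : G⁻¹ = UG * diagonal (fun i => ((n:ℝ) * ν i)⁻¹) * star UG := by
    conv_lhs => rw [hGspec]
    exact inv_UDU hU1G hU2G fun i => ne_of_gt (hnν0 i)
  set M : Matrix (Fin p) (Fin n) ℝ := G⁻¹ * Xᵀ with hM
  have hMX : M * X = 1 := by
    rw [hM, Matrix.mul_assoc, ← hG, Matrix.nonsing_inv_mul G hdetG0]
  have hMT : Mᵀ = X * G⁻¹ := by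
    rw [hM, Matrix.transpose_mul, Matrix.transpose_transpose,
      Matrix.transpose_nonsing_inv, hGsymT]
  have hMMT : M * Mᵀ = G⁻¹ := by
    rw [hMT, hM, Matrix.mul_assoc G⁻¹ Xᵀ (X * G⁻¹), ← Matrix.mul_assoc Xᵀ X G⁻¹, ← hG,
      Matrix.mul_nonsing_inv G hdetG0, Matrix.mul_one]
  set a : Matrix (Fin n) (Fin K) ℝ := -(Mᵀ * e) with ha
  have hΨbound : ∀ x : Fin K → ℝ, x ⬝ᵥ Ψ *ᵥ x ≤ d * (x ⬝ᵥ x) := by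
    intro x
    conv_lhs => rw [spectral_real hΨ.1]
    exact quad_UDU_le (unitary_mul_star hΨ.1) (fun i => hd.2 ⟨i, rfl⟩) x
  have hGinvbound : ∀ x : Fin p → ℝ, x ⬝ᵥ G⁻¹ *ᵥ x ≤ ((n:ℝ)*c)⁻¹ * (x ⬝ᵥ x) := by
    intro x
    rw [hGinv]
    refine quad_UDU_le hU1G (fun i => ?_) x
    exact inv_anti₀ hnc0 (hnν i)
  have hfaa : finner a a ≤ ((n:ℝ)*c)⁻¹ := by
    have h1 : finner a a = finner e (G⁻¹ * e) := by
      rw [ha, finner_neg_neg, finner_mul_left Mᵀ e (Mᵀ * e), Matrix.transpose_transpose,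
        ← Matrix.mul_assoc, hMMT]
    rw [h1, finner_quad]
    calc ∑ k, (fun j => e j k) ⬝ᵥ G⁻¹ *ᵥ (fun j => e j k)
        ≤ ∑ k, ((n:ℝ)*c)⁻¹ * ((fun j => e j k) ⬝ᵥ (fun j => e j k)) :=
          Finset.sum_le_sum fun k _ => hGinvbound _
      _ = ((n:ℝ)*c)⁻¹ * ∑ k, ∑ j, e j k * e j k := by rw [← Finset.mul_sum]; rfl
      _ = ((n:ℝ)*c)⁻¹ * finner e e := by
          congr 1
      _ = ((n:ℝ)*c)⁻¹ := by rw [hfee, mul_one]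
  set Sval : ℝ := ∑ i, (a i) ⬝ᵥ Ψ *ᵥ (a i) with hSval
  have hSle : Sval ≤ d * ((n:ℝ)*c)⁻¹ := by
    calc Sval ≤ ∑ i, d * ((a i) ⬝ᵥ (a i)) := Finset.sum_le_sum fun i _ => hΨbound (a i)
      _ = d * finner a a := by rw [← Finset.mul_sum, finner_eq_sum]; rfl
      _ ≤ d * ((n:ℝ)*c)⁻¹ := mul_le_mul_of_nonneg_left hfaa (le_of_lt hd0)
  set lam0 : ℝ := ε * n * c / (2 * d) with hlam0
  have hlam0pos : 0 < lam0 := by rw [hlam0]; positivity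
  set Sset : Set (Fin n → Fin K → ℝ) :=
    {Y' : Fin n → Fin K → ℝ | frobNorm (M * Matrix.of Y' - B₀) ≤ ε / 2} with hSset
  have hTY : ∀ Y : Fin n → Fin K → ℝ, Y ∈ Sset →
      ε/2 ≤ finner (Matrix.of Y - X * B) a := by
    intro Y hY
    have hY' : frobNorm (M * Matrix.of Y - B₀) ≤ ε / 2 := hY
    have h1 : finner (Matrix.of Y - X * B) a
        = - finner (M * (Matrix.of Y - X * B)) e := by
      rw [ha, finner_neg_right, finner_mul_left]
    have h2 : M * (Matrix.of Y - X * B) = (M * Matrix.of Y - B₀) - Δ := by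
      rw [Matrix.mul_sub, ← Matrix.mul_assoc, hMX, Matrix.one_mul, hΔ]
      abel
    have h3 : finner ((M * Matrix.of Y - B₀) - Δ) e
        = finner (M * Matrix.of Y - B₀) e - nd := by
      rw [finner_sub_left, hfΔe]
    have h4 : finner (M * Matrix.of Y - B₀) e ≤ ε/2 := by
      calc finner (M * Matrix.of Y - B₀) e
          ≤ frobNorm (M * Matrix.of Y - B₀) * frobNorm e := finner_le_frob _ _
        _ = frobNorm (M * Matrix.of Y - B₀) := by rw [hfrobe, mul_one]
        _ ≤ ε/2 := hY'
    rw [h1, h2, h3]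
    have : ε < nd := hB
    linarith
  set g : (Fin n → Fin K → ℝ) → ℝ := fun Y =>
    Real.exp (-(lam0 * (ε/2))) * ∏ i, (normalDensity Ψ (fun k => (X * B) i k) (Y i) *
      Real.exp ((Y i - fun k => (X * B) i k) ⬝ᵥ (lam0 • a i))) with hg
  have hrow := fun i : Fin n => gauss_mgf Ψ hΨ (fun k => (X * B) i k) (lam0 • a i)
  have hg_int : Integrable g := by
    exact (Integrable.fintype_prod_dep
      (f := fun (i : Fin n) (y : Fin K → ℝ) => normalDensity Ψ (fun k => (X * B) i k) y *
        Real.exp ((y - fun k => (X * B) i k) ⬝ᵥ (lam0 • a i)))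
      (fun i => (hrow i).1)).const_mul _
  have hg_val : ∫ Y : Fin n → Fin K → ℝ, g Y
      = Real.exp (-(lam0 * (ε/2)) + lam0^2/2 * Sval) := by
    rw [hg]
    simp only []
    rw [MeasureTheory.integral_const_mul]
    rw [MeasureTheory.integral_fintype_prod_volume_eq_prod
      (f := fun (i : Fin n) (y : Fin K → ℝ) => normalDensity Ψ (fun k => (X * B) i k) y *
        Real.exp ((y - fun k => (X * B) i k) ⬝ᵥ (lam0 • a i)))]
    rw [Finset.prod_congr rfl fun i _ => (hrow i).2]
    rw [← Real.exp_sum, ← Real.exp_add]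
    congr 1
    have hterm : ∀ i : Fin n, (1:ℝ)/2 * ((lam0 • a i) ⬝ᵥ Ψ *ᵥ (lam0 • a i))
        = lam0^2/2 * ((a i) ⬝ᵥ Ψ *ᵥ (a i)) := by
      intro i
      rw [smul_dotProduct, Matrix.mulVec_smul, dotProduct_smul, smul_eq_mul, smul_eq_mul]
      ring
    rw [Finset.sum_congr rfl fun i _ => hterm i, ← Finset.mul_sum, ← hSval]
  have hpoint : ∀ Y : Fin n → Fin K → ℝ,
      (∏ i, normalDensity Ψ (fun k => (X * B) i k) (Y i)) *
        Set.indicator Sset (fun _ => (1:ℝ)) Y ≤ g Y := by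
    intro Y
    have hprod_nonneg : 0 ≤ ∏ i, normalDensity Ψ (fun k => (X * B) i k) (Y i) :=
      Finset.prod_nonneg fun i _ => hdens_nonneg _ _
    have hgsplit : g Y = (∏ i, normalDensity Ψ (fun k => (X * B) i k) (Y i)) *
        Real.exp (lam0 * finner (Matrix.of Y - X * B) a - lam0 * (ε/2)) := by
      rw [hg]
      simp only []
      rw [Finset.prod_mul_distrib, ← Real.exp_sum]
      have hsum : ∑ i, ((Y i - fun k => (X * B) i k) ⬝ᵥ (lam0 • a i))
          = lam0 * finner (Matrix.of Y - X * B) a := by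
        rw [finner_eq_sum, Finset.mul_sum]
        refine Finset.sum_congr rfl fun i _ => ?_
        rw [dotProduct_smul, smul_eq_mul]
        congr 1
      rw [hsum, mul_left_comm, ← Real.exp_add]
      congr 2
      ring
    by_cases hY : Y ∈ Sset
    · rw [Set.indicator_of_mem hY, hgsplit, mul_one]
      apply le_mul_of_one_le_right hprod_nonneg
      rw [← Real.exp_zero]
      apply Real.exp_le_exp.mpr
      have hT := hTY Y hY
      nlinarith
    · rw [Set.indicator_of_notMem hY, mul_zero, hgsplit]
      exact mul_nonneg hprod_nonneg (Real.exp_nonneg _)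
  have hf_nonneg : ∀ Y : Fin n → Fin K → ℝ,
      0 ≤ (∏ i, normalDensity Ψ (fun k => (X * B) i k) (Y i)) *
        Set.indicator Sset (fun _ => (1:ℝ)) Y := fun Y =>
    mul_nonneg (Finset.prod_nonneg fun i _ => hdens_nonneg _ _)
      (Set.indicator_nonneg (fun _ _ => zero_le_one) _)
  calc (∫ Y : Fin n → Fin K → ℝ,
          (∏ i, normalDensity Ψ (fun k => (X * B) i k) (Y i)) *
            Set.indicator Sset (fun _ => (1:ℝ)) Y)
      ≤ ∫ Y : Fin n → Fin K → ℝ, g Y :=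
        integral_mono_of_nonneg (Filter.Eventually.of_forall hf_nonneg) hg_int
          (Filter.Eventually.of_forall hpoint)
    _ = Real.exp (-(lam0 * (ε/2)) + lam0^2/2 * Sval) := hg_val
    _ ≤ Real.exp (-((n:ℝ) * ε^2 * c / (16*d))) := by
        apply Real.exp_le_exp.mpr
        have h1 : lam0^2/2 * Sval ≤ lam0^2/2 * (d * ((n:ℝ)*c)⁻¹) :=
          mul_le_mul_of_nonneg_left hSle (by positivity)
        have h2 : -(lam0 * (ε/2)) + lam0^2/2 * (d * ((n:ℝ)*c)⁻¹)
            = -((n:ℝ) * ε^2 * c / (8*d)) := by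
          rw [hlam0]
          field_simp
          ring
        have h3 : (n:ℝ) * ε^2 * c / (16*d) ≤ (n:ℝ) * ε^2 * c / (8*d) := by
          apply div_le_div_of_nonneg_left (by positivity) (by positivity)
          nlinarith
        linarith
end

section
/- For every λ > 0, the integral identity ∫₀^∞ 2λ · g(λ²; 1/2, 1/ν) · g(ν; 1/2, 1) dν = 2 / ( π (1 + λ²) ) holds, where g(x; α, β) = (β^α / Γ(α)) x^{−α−1} e^{−β/x} for x > 0 is the inverse-gamma density. That is, if ν has the inverse-gamma IG(1/2, 1) distribution and, given ν, λ² has the inverse-gamma IG(1/2, 1/ν) distribution, then the marginal density of λ is the standard half-Cauchy density 2/(π(1+λ²)) on (0, ∞). -/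
open MeasureTheory Real

/-- The inverse-gamma density `g(x; α, β) = (β^α / Γ(α)) x^{-α-1} e^{-β/x}` for `x > 0`. -/
noncomputable def invGammaDensity (α β x : ℝ) : ℝ :=
  β ^ α / Real.Gamma α * x ^ (-α - 1) * Real.exp (-β / x)

lemma aux_inv_integral {c : ℝ} (hc : 0 < c) :
    ∫ ν in Set.Ioi (0 : ℝ), ν ^ (-2 : ℝ) * Real.exp (-(c * ν⁻¹)) = 1 / c := by
  have h := MeasureTheory.integral_comp_rpow_Ioi (fun y => Real.exp (-(c * y)))
    (p := -1) (by norm_num)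
  simp only [abs_neg, abs_one, one_mul, smul_eq_mul] at h
  have h2 : ∫ t : ℝ in Set.Ioi 0, t ^ ((1:ℝ) - 1) * Real.exp (-(c * t))
      = (1 / c) ^ (1:ℝ) * Real.Gamma 1 := integral_rpow_mul_exp_neg_mul_Ioi one_pos hc
  simp only [sub_self, Real.rpow_zero, one_mul, Real.rpow_one, Real.Gamma_one, mul_one] at h2
  rw [← h2, ← h]
  refine setIntegral_congr_fun measurableSet_Ioi (fun x hx => ?_)
  have hx0 : (0:ℝ) < x := hx
  rw [show (-1 : ℝ) - 1 = -2 by norm_num, Real.rpow_neg_one]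

/-- If `ν ~ IG(1/2, 1)` and `λ² | ν ~ IG(1/2, 1/ν)`, then the marginal density of
`λ` is the standard half-Cauchy density `2 / (π (1 + λ²))`. -/
theorem stmt_10 (l : ℝ) (hl : 0 < l) :
    ∫ ν in Set.Ioi (0 : ℝ),
        2 * l * invGammaDensity (1 / 2) (1 / ν) (l ^ 2) * invGammaDensity (1 / 2) 1 ν
      = 2 / (π * (1 + l ^ 2)) := by
  set c : ℝ := 1 + 1 / l ^ 2 with hc
  have hl2 : (0:ℝ) < l ^ 2 := by positivity
  have hcpos : 0 < c := by positivity
  have key := aux_inv_integral hcpos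
  have heq : ∫ ν in Set.Ioi (0 : ℝ),
      2 * l * invGammaDensity (1 / 2) (1 / ν) (l ^ 2) * invGammaDensity (1 / 2) 1 ν
      = ∫ ν in Set.Ioi (0 : ℝ), (2 / (π * l ^ 2)) * (ν ^ (-2 : ℝ) * Real.exp (-(c * ν⁻¹))) := by
    refine setIntegral_congr_fun measurableSet_Ioi (fun ν hν => ?_)
    have hν0 : (0:ℝ) < ν := hν
    have hΓ : Real.Gamma (1/2 : ℝ) = Real.sqrt π := Real.Gamma_one_half_eq
    have h1 : ((1:ℝ)/ν) ^ ((1:ℝ)/2) = ν ^ (-(1:ℝ)/2) := by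
      rw [Real.div_rpow zero_le_one hν0.le, Real.one_rpow,
        show (-1:ℝ)/2 = -(1/2) by norm_num, Real.rpow_neg hν0.le, one_div]
    have h2 : ((1:ℝ)) ^ ((1:ℝ)/2) = 1 := Real.one_rpow _
    have h3 : (l ^ 2 : ℝ) ^ (-(1:ℝ)/2 - 1) = (l ^ 2) ^ (-(3:ℝ)/2) := by norm_num
    have h4 : (l ^ 2 : ℝ) ^ (-(3:ℝ)/2) = l ^ (-3 : ℝ) := by
      rw [← Real.rpow_natCast l 2, ← Real.rpow_mul hl.le]; norm_num
    have h5 : ν ^ (-(1:ℝ)/2 - 1) = ν ^ (-(3:ℝ)/2) := by norm_num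
    have h6 : ν ^ (-(1:ℝ)/2) * ν ^ (-(3:ℝ)/2) = ν ^ (-2 : ℝ) := by
      rw [← Real.rpow_add hν0]; norm_num
    have h7 : Real.exp (-(1/ν) / l ^ 2) * Real.exp (-1 / ν) = Real.exp (-(c * ν⁻¹)) := by
      rw [← Real.exp_add]
      congr 1
      field_simp [hc]
      rw [hc, mul_add, mul_one_div_cancel hl2.ne']; ring
    have hsq : Real.sqrt π * Real.sqrt π = π :=
      Real.mul_self_sqrt Real.pi_pos.le
    have hl3 : l ^ (-3 : ℝ) = 1 / l ^ 3 := by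
      rw [Real.rpow_neg hl.le, ← Real.rpow_natCast l 3]
      simp [one_div]
    simp only [invGammaDensity, hΓ]
    rw [show (-(1:ℝ)/2 - 1) = (-(1/2 : ℝ) - 1) by norm_num] at *
    rw [h1, h2, h3, h4, h5]
    rw [hl3]
    have he : Real.exp (-1 / (ν * l ^ 2)) * Real.exp (-1 / ν) = Real.exp (-c / ν) := by
      rw [← Real.exp_add]
      congr 1
      field_simp [hc]
      rw [hc, mul_add, mul_one_div_cancel hl2.ne']; ring
    field_simp
    have e1 : Real.exp (-(1 / (l ^ 2 * ν))) * Real.exp (-(1 / ν)) = Real.exp (-(c / ν)) := by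
      rw [← Real.exp_add, hc]; congr 1; field_simp; ring
    have e2 : ν ^ (-(1 / 2) : ℝ) * ν ^ (-(3 / 2) : ℝ) = ν ^ (-2 : ℝ) := by
      rw [← Real.rpow_add hν0]; norm_num
    rw [Real.sq_sqrt Real.pi_pos.le, ← e1, ← e2]
    ring
  rw [heq, MeasureTheory.integral_const_mul, key]
  rw [hc]
  field_simp
  ring
end
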